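/- (Homological perturbation.) Let M and M′ be ℤ-graded modules over a ring, and let d : M ⊕ M′ → M ⊕ M′ be a degree −1 map with d² = 0, written in matrix form d = [[α, β],[γ, δ]] with α : M→M, β : M′→M, γ : M→M′, δ : M′→M′. Assume γ∘β = 0 (equivalently δ² = 0), and assume there is a degree +1 map H : M′ → M′ with H∘δ + δ∘H = id. Then: (1) d′ := α − β∘H∘γ satisfies (d′)² = 0; (2) the map i : M → M⊕M′, i(x) = (x, −Hγ(x)), satisfies d∘i = i∘d′; (3) the map p : M⊕M′ → M, p(x,x′) = x − βH(x′), satisfies p∘d = d′∘p. -/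
import Mathlib


/-- **Homological perturbation.** Let `d = [[α, β],[γ, δ]]` be a degree `−1` map
on `M ⊕ M′` with `d² = 0` (written componentwise), with `γ∘β = 0` and a homotopy
`H : M′ → M′` with `H∘δ + δ∘H = id`.  Then `d′ = α − β∘H∘γ` squares to zero, and the
maps `i(x) = (x, −Hγx)` and `p(x,x′) = x − βH(x′)` are chain maps: `d∘i = i∘d′` and
`p∘d = d′∘p`. -/
theorem homological_perturbation
    {R M M' : Type*} [Ring R] [AddCommGroup M] [AddCommGroup M']
    [Module R M] [Module R M']
    (α : M →ₗ[R] M) (β : M' →ₗ[R] M) (γ : M →ₗ[R] M') (δ : M' →ₗ[R] M')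
    (hd : ∀ (x : M) (x' : M'),
      α (α x + β x') + β (γ x + δ x') = 0 ∧ γ (α x + β x') + δ (γ x + δ x') = 0)
    (hγβ : ∀ x', γ (β x') = 0)
    (H : M' →ₗ[R] M') (hH : ∀ x', H (δ x') + δ (H x') = x') :
    -- (1) `d′ = α − βHγ` squares to zero
    (∀ x : M, α (α x - β (H (γ x))) - β (H (γ (α x - β (H (γ x))))) = 0) ∧
    -- (2) `d ∘ i = i ∘ d′` for `i(x) = (x, −Hγx)`
    (∀ x : M,
      α x + β (-(H (γ x))) = α x - β (H (γ x)) ∧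
      γ x + δ (-(H (γ x))) = -(H (γ (α x - β (H (γ x)))))) ∧
    -- (3) `p ∘ d = d′ ∘ p` for `p(x,x′) = x − βH(x′)`
    (∀ (x : M) (x' : M'),
      (α x + β x') - β (H (γ x + δ x')) =
        α (x - β (H x')) - β (H (γ (x - β (H x'))))) := by
  have hαα : ∀ x : M, α (α x) = -β (γ x) := fun x => by
    have := (hd x 0).1; simp at this; exact eq_neg_of_add_eq_zero_left this
  have hγα : ∀ x : M, γ (α x) = -δ (γ x) := fun x => by
    have := (hd x 0).2; simp at this; exact eq_neg_of_add_eq_zero_left this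
  have hαβ : ∀ x' : M', α (β x') = -β (δ x') := fun x' => by
    have := (hd 0 x').1; simp at this; exact eq_neg_of_add_eq_zero_left this
  have hHδ : ∀ x' : M', H (δ x') = x' - δ (H x') := fun x' =>
    eq_sub_of_add_eq (hH x')
  refine ⟨?_, ?_, ?_⟩
  · intro x
    simp only [map_sub, hγβ, map_zero, sub_zero, hαα, hαβ, hγα, map_neg, neg_neg,
      hHδ, map_sub]
    abel
  · intro x
    refine ⟨by rw [map_neg]; abel, ?_⟩
    simp only [map_sub, hγβ, sub_zero, hγα, map_neg, neg_neg, hHδ]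
    abel
  · intro x x'
    simp only [map_sub, map_add, hγβ, map_zero, sub_zero, hαβ, map_neg, neg_neg,
      hHδ, map_sub]
    abel
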